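/- Let F be a number field of degree n with r₂ complex infinite primes and discriminant Δ_F, and set ∂_F = (2/π)^{r₂}·√|Δ_F|. If I is a fractional ideal such that the Arakelov divisor d(I) = (I, N(I)^{−1/n}) is reduced (i.e., 1 ∈ I is a minimal element), then I^{−1} is an integral ideal of O_F of norm N(I^{−1}) ≤ ∂_F. -/

import Mathlib

open NumberField Module FractionalIdeal
open scoped nonZeroDivisors Classical

/-- Prop. 7.2(i). If the Arakelov divisor
`d(I) = (I, N(I)^{-1/n})` is reduced, i.e. `1 ∈ I` is a minimal element, then
`I⁻¹` is an integral ideal of `O_F` of norm at most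
`∂_F = (2/π)^{r₂}·√|Δ_F|`. -/
theorem reduced_inverse_integral_small_norm (F : Type*) [Field F] [NumberField F]
    (I : FractionalIdeal (𝓞 F)⁰ F) (hI : I ≠ 0)
    (hone : (1 : F) ∈ I)
    (hmin : ∀ g : F, g ∈ I → (∀ w : InfinitePlace F, w g < 1) → g = 0) :
    I⁻¹ ≤ 1 ∧
      (absNorm I⁻¹ : ℝ) ≤
        (2 / Real.pi) ^ (InfinitePlace.nrComplexPlaces F) * Real.sqrt |(discr F : ℝ)| := by
  have h1le : (1 : FractionalIdeal (𝓞 F)⁰ F) ≤ I := by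
    rwa [← FractionalIdeal.spanSingleton_le_iff_mem, FractionalIdeal.spanSingleton_one] at hone
  have hinv : I⁻¹ ≤ 1 := by
    calc I⁻¹ = I⁻¹ * 1 := (mul_one _).symm
    _ ≤ I⁻¹ * I := mul_le_mul_right h1le I⁻¹
    _ = 1 := by rw [mul_comm]; exact mul_inv_cancel₀ hI
  refine ⟨hinv, ?_⟩
  by_contra hc
  push_neg at hc
  -- basic positivity facts
  have hNpos : (0 : ℚ) < absNorm I := by
    have h := absNorm_nonneg I
    rcases h.lt_or_eq with h' | h'
    · exact h'
    · exfalso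
      have : absNorm I * absNorm I⁻¹ = 1 := by
        rw [← _root_.map_mul absNorm, mul_inv_cancel₀ hI, _root_.map_one absNorm]
      rw [← h', zero_mul] at this
      exact zero_ne_one this
  have hNinv : (absNorm I⁻¹ : ℝ) = ((absNorm I : ℝ))⁻¹ := by
    rw [map_inv₀]
    push_cast
    ring
  set U : (FractionalIdeal (𝓞 F)⁰ F)ˣ := Units.mk0 I hI with hU
  set f : InfinitePlace F → NNReal := fun _ => 1 with hf
  have hKey : NumberField.mixedEmbedding.minkowskiBound F U <
      MeasureTheory.volume (NumberField.mixedEmbedding.convexBodyLT F f) := by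
    have hmbne : NumberField.mixedEmbedding.minkowskiBound F U ≠ ⊤ :=
      (NumberField.mixedEmbedding.minkowskiBound_lt_top F U).ne
    have hvolne : MeasureTheory.volume (NumberField.mixedEmbedding.convexBodyLT F f) ≠ ⊤ := by
      rw [NumberField.mixedEmbedding.convexBodyLT_volume]
      exact ENNReal.mul_ne_top ENNReal.coe_ne_top ENNReal.coe_ne_top
    rw [← ENNReal.toReal_lt_toReal hmbne hvolne]
    have hmb : (NumberField.mixedEmbedding.minkowskiBound F U).toReal =
        (absNorm I : ℝ) * ((2 : ℝ)⁻¹) ^ (InfinitePlace.nrComplexPlaces F) *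
          Real.sqrt |(discr F : ℝ)| * 2 ^ (finrank ℚ F) := by
      rw [NumberField.mixedEmbedding.minkowskiBound,
        NumberField.mixedEmbedding.volume_fundamentalDomain_fractionalIdealLatticeBasis,
        NumberField.mixedEmbedding.volume_fundamentalDomain_latticeBasis, hU, Units.val_mk0,
        ENNReal.toReal_mul, ENNReal.toReal_mul, ENNReal.toReal_mul, ENNReal.toReal_pow,
        ENNReal.toReal_pow, ENNReal.toReal_inv, ENNReal.toReal_ofNat, ENNReal.coe_toReal,
        ENNReal.toReal_ofReal (Rat.cast_nonneg.mpr (absNorm_nonneg I)),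
        NumberField.mixedEmbedding.finrank]
      have hs : (NNReal.sqrt ‖discr F‖₊ : ℝ) = Real.sqrt |(discr F : ℝ)| := by
        rw [Real.coe_sqrt, coe_nnnorm, Int.norm_eq_abs]
      rw [hs]
      ring
    have hvol : (MeasureTheory.volume (NumberField.mixedEmbedding.convexBodyLT F f)).toReal =
        (2 : ℝ) ^ (InfinitePlace.nrRealPlaces F) *
          Real.pi ^ (InfinitePlace.nrComplexPlaces F) := by
      rw [NumberField.mixedEmbedding.convexBodyLT_volume]
      simp [hf, NumberField.mixedEmbedding.convexBodyLTFactor, ENNReal.toReal_mul,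
        ENNReal.toReal_pow]
    rw [hmb, hvol]
    -- now a real inequality
    have hpi : (0 : ℝ) < Real.pi := Real.pi_pos
    have hd : (0 : ℝ) ≤ Real.sqrt |(discr F : ℝ)| := Real.sqrt_nonneg _
    have hNR : (0 : ℝ) < (absNorm I : ℝ) := by exact_mod_cast hNpos
    -- from hc : (2/π)^r₂ * √|Δ| < absNorm I⁻¹ = (absNorm I)⁻¹
    have key : (absNorm I : ℝ) * ((2 / Real.pi) ^ (InfinitePlace.nrComplexPlaces F) *
        Real.sqrt |(discr F : ℝ)|) < 1 := by
      rw [hNinv] at hc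
      calc (absNorm I : ℝ) * ((2 / Real.pi) ^ (InfinitePlace.nrComplexPlaces F) *
          Real.sqrt |(discr F : ℝ)|) < (absNorm I : ℝ) * ((absNorm I : ℝ))⁻¹ := by
            exact mul_lt_mul_of_pos_left hc hNR
        _ = 1 := mul_inv_cancel₀ hNR.ne'
    -- rewrite target
    have hrank : finrank ℚ F = InfinitePlace.nrRealPlaces F +
        2 * InfinitePlace.nrComplexPlaces F := (InfinitePlace.card_add_two_mul_card_eq_rank F).symm
    rw [hrank, pow_add, pow_mul]
    have h2 : ((2 : ℝ) ^ 2) ^ InfinitePlace.nrComplexPlaces F =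
        (4 : ℝ) ^ InfinitePlace.nrComplexPlaces F := by norm_num
    rw [h2]
    have hexp : (absNorm I : ℝ) * (2 : ℝ)⁻¹ ^ InfinitePlace.nrComplexPlaces F *
        Real.sqrt |(discr F : ℝ)| * ((2 : ℝ) ^ InfinitePlace.nrRealPlaces F *
          (4 : ℝ) ^ InfinitePlace.nrComplexPlaces F) =
        ((absNorm I : ℝ) * ((2 / Real.pi) ^ (InfinitePlace.nrComplexPlaces F) *
          Real.sqrt |(discr F : ℝ)|)) * ((2 : ℝ) ^ InfinitePlace.nrRealPlaces F *
            Real.pi ^ InfinitePlace.nrComplexPlaces F) := by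
      rw [div_pow]
      rw [show (4 : ℝ) = 2 * 2 by norm_num, mul_pow, inv_pow]
      field_simp
    rw [hexp]
    calc ((absNorm I : ℝ) * ((2 / Real.pi) ^ (InfinitePlace.nrComplexPlaces F) *
        Real.sqrt |(discr F : ℝ)|)) * ((2 : ℝ) ^ InfinitePlace.nrRealPlaces F *
          Real.pi ^ InfinitePlace.nrComplexPlaces F)
        < 1 * ((2 : ℝ) ^ InfinitePlace.nrRealPlaces F *
            Real.pi ^ InfinitePlace.nrComplexPlaces F) := by
          exact mul_lt_mul_of_pos_right key (by positivity)
      _ = _ := one_mul _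
  obtain ⟨a, haI, ha0, haw⟩ :=
    NumberField.mixedEmbedding.exists_ne_zero_mem_ideal_lt F U hKey
  have : a = 0 := by
    refine hmin a ?_ fun w => by simpa [hf] using haw w
    simpa [hU] using haI
  exact ha0 this
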